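/- If X is a weakly initially λ-compact topological space and 2^μ ≤ λ, then X is D-pseudocompact for every ultrafilter D over a set of cardinality at most μ. -/

import Mathlib

open Cardinal Set

universe u v

/-- `x` is a `D`-limit point of the family of sets `O`. -/
def DLimitSets {X : Type u} {I : Type v} [TopologicalSpace X]
    (D : Ultrafilter I) (O : I → Set X) (x : X) : Prop :=
  ∀ U ∈ nhds x, {i | (U ∩ O i).Nonempty} ∈ D

/-- `X` is `D`-pseudocompact. -/
def DPseudocompact (X : Type u) {I : Type v} [TopologicalSpace X]
    (D : Ultrafilter I) : Prop :=
  ∀ O : I → Set X, (∀ i, IsOpen (O i)) → (∀ i, (O i).Nonempty) →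
    ∃ x : X, DLimitSets D O x

/-- Every open cover of cardinality at most `lam` has a finite subfamily with dense union. -/
def WeaklyInitiallyCompact (X : Type u) [TopologicalSpace X] (lam : Cardinal.{u}) : Prop :=
  ∀ 𝒰 : Set (Set X), (∀ U ∈ 𝒰, IsOpen U) → ⋃₀ 𝒰 = Set.univ →
    Cardinal.mk 𝒰 ≤ lam →
    ∃ t : Finset (Set X), ↑t ⊆ 𝒰 ∧ Dense (⋃₀ (t : Set (Set X)))

/-- A regular ultrafilter over `I` (regular of degree `|I|`): there is an `I`-indexed
family of members of `D` every infinite subfamily of which has empty intersection. -/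
def RegularUltrafilter {I : Type v} (D : Ultrafilter I) : Prop :=
  ∃ Z : I → Set I, (∀ i, Z i ∈ D) ∧
    ∀ S : Set I, S.Infinite → ⋂ i ∈ S, Z i = ∅

theorem weaklyInitiallyCompact_implies_dPseudocompact
    {X : Type u} [TopologicalSpace X] (lam mu : Cardinal.{u})
    (hlam : Cardinal.aleph0 ≤ lam) (hmu : Cardinal.aleph0 ≤ mu)
    (hX : WeaklyInitiallyCompact X lam) (h2 : 2 ^ mu ≤ lam)
    (I : Type u) (hI : Cardinal.mk I ≤ mu) (D : Ultrafilter I) :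
    DPseudocompact X D := by
  intro O hOopen hOne
  by_contra hno
  push_neg at hno
  have key : ∀ x : X, ∃ V : Set X, IsOpen V ∧ x ∈ V ∧ {i | V ∩ O i = ∅} ∈ D := by
    intro x
    have hx := hno x
    simp only [DLimitSets, not_forall] at hx
    obtain ⟨U, hU, hUD⟩ := hx
    obtain ⟨V, hVU, hVopen, hxV⟩ := mem_nhds_iff.mp hU
    refine ⟨V, hVopen, hxV, ?_⟩
    have hc : {i | (U ∩ O i).Nonempty}ᶜ ∈ D := Ultrafilter.compl_mem_iff_notMem.mpr hUD
    refine D.toFilter.mem_of_superset hc ?_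
    intro i hi
    simp only [mem_compl_iff, mem_setOf_eq, Set.not_nonempty_iff_eq_empty] at hi ⊢
    exact eq_empty_of_subset_empty ((inter_subset_inter_left _ hVU).trans hi.subset)
  set W : Set I → Set X := fun A => ⋃₀ {U | IsOpen U ∧ ∀ i ∈ A, U ∩ O i = ∅} with hW
  have hWopen : ∀ A, IsOpen (W A) := fun A => isOpen_sUnion fun U hU => hU.1
  have hWdisj : ∀ A, ∀ i ∈ A, W A ∩ O i = ∅ := by
    intro A i hi
    apply eq_empty_of_subset_empty
    rintro x ⟨hx, hxO⟩
    obtain ⟨U, ⟨hUo, hUd⟩, hxU⟩ := hx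
    exact (hUd i hi).subset ⟨hxU, hxO⟩
  set 𝒰 : Set (Set X) := W '' {A | A ∈ D} with h𝒰
  have hcov : ⋃₀ 𝒰 = Set.univ := by
    apply eq_univ_of_forall
    intro x
    obtain ⟨V, hVo, hxV, hAD⟩ := key x
    exact ⟨W {i | V ∩ O i = ∅}, ⟨_, hAD, rfl⟩, ⟨V, ⟨hVo, fun i hi => hi⟩, hxV⟩⟩
  have hcard : Cardinal.mk 𝒰 ≤ lam := by
    calc Cardinal.mk 𝒰 ≤ Cardinal.mk {A : Set I | A ∈ D} := Cardinal.mk_image_le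
      _ ≤ Cardinal.mk (Set I) := Cardinal.mk_set_le _
      _ = 2 ^ Cardinal.mk I := Cardinal.mk_set
      _ ≤ 2 ^ mu := by
          exact Cardinal.power_le_power_left (by norm_num) hI
      _ ≤ lam := h2
  obtain ⟨t, ht𝒰, htd⟩ := hX 𝒰 (by rintro U ⟨A, _, rfl⟩; exact hWopen A) hcov hcard
  have hchoose : ∀ u : {u // u ∈ t}, ∃ A, A ∈ D ∧ W A = u.1 := fun u => ht𝒰 u.2
  choose Af hAfD hAfW using hchoose
  have hinter : (⋂ u : {u // u ∈ t}, Af u) ∈ D := by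
    have : Finite {u // u ∈ t} := inferInstance
    exact Filter.iInter_mem.mpr hAfD
  obtain ⟨i, hi⟩ := Ultrafilter.nonempty_of_mem hinter
  have hiA : ∀ u : {u // u ∈ t}, i ∈ Af u := fun u => mem_iInter.mp hi u
  obtain ⟨x, hxO, hxU⟩ := htd.inter_open_nonempty (O i) (hOopen i) (hOne i)
  obtain ⟨u, hu, hxu⟩ := hxU
  have : x ∈ W (Af ⟨u, hu⟩) ∩ O i := ⟨(hAfW ⟨u, hu⟩).symm ▸ hxu, hxO⟩
  rw [hWdisj _ i (hiA ⟨u, hu⟩)] at this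
  exact this
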